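/- Let A be symmetric positive semidefinite d×d with eigenvalues λ_1 ≥ ... ≥ λ_d ≥ 0. Then for every W ∈ ℝ^{d×k}, trace(WᵀAW(2I_k − WᵀW)) = trace(A·WWᵀ(2I_d − WWᵀ)) ≤ Σ_{i=1}^k λ_i. -/

import Mathlib

open Matrix

private lemma abel_bound' (d k : ℕ) (hkd : k ≤ d) (μ τ : ℕ → ℝ)
    (hμdec : ∀ i j : ℕ, i ≤ j → μ j ≤ μ i) (hμ0 : ∀ i, 0 ≤ μ i)
    (hpart : ∀ m, m ≤ d → ∑ j ∈ Finset.range m, τ j ≤ (min m k : ℕ)) :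
    ∑ j ∈ Finset.range d, μ j * τ j ≤ ∑ j ∈ Finset.range k, μ j := by
  open Finset in
  set c : ℕ → ℝ := fun j => if j < k then 1 else 0 with hc
  have hcsum : ∀ m : ℕ, ∑ j ∈ range m, c j = min m k := by
    intro m
    have h1 : (range m).filter (fun j => j < k) = range (min m k) := by
      ext j; simp [Nat.lt_min]
    calc ∑ j ∈ range m, c j = ∑ j ∈ (range m).filter (fun j => j < k), 1 := by
          rw [Finset.sum_filter]
      _ = min m k := by rw [h1]; simp
  have hrhs : ∑ j ∈ range k, μ j = ∑ j ∈ range d, μ j * c j := by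
    have h1 : (range d).filter (fun j => j < k) = range k := by
      ext j; simp; omega
    calc ∑ j ∈ range k, μ j = ∑ j ∈ (range d).filter (fun j => j < k), μ j := by rw [h1]
      _ = ∑ j ∈ range d, μ j * c j := by
          rw [Finset.sum_filter]; apply Finset.sum_congr rfl; intro j _
          by_cases h : j < k <;> simp [hc, h]
  rw [hrhs, ← sub_nonpos, ← Finset.sum_sub_distrib]
  have key : ∑ j ∈ range d, (μ j * τ j - μ j * c j) = ∑ j ∈ range d, μ j • (τ j - c j) := by
    apply Finset.sum_congr rfl; intro j _; simp [mul_sub]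
  rw [key, Finset.sum_range_by_parts]
  have hD : ∀ m, m ≤ d → ∑ j ∈ range m, (τ j - c j) ≤ 0 := by
    intro m hm
    rw [Finset.sum_sub_distrib, sub_nonpos, hcsum]
    exact hpart m hm
  have h1 : μ (d - 1) • ∑ j ∈ range d, (τ j - c j) ≤ 0 :=
    smul_nonpos_of_nonneg_of_nonpos (hμ0 _) (hD d le_rfl)
  have h2 : (0:ℝ) ≤ ∑ i ∈ range (d - 1), (μ (i + 1) - μ i) • ∑ j ∈ range (i + 1), (τ j - c j) := by
    apply Finset.sum_nonneg; intro i hi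
    have hi' : i + 1 ≤ d := by simp at hi; omega
    have ha : μ (i+1) - μ i ≤ 0 := by simp [sub_nonpos]; exact hμdec i (i+1) (by omega)
    have hb := hD (i+1) hi'
    have := mul_nonneg (neg_nonneg.mpr ha) (neg_nonneg.mpr hb)
    simp only [smul_eq_mul]
    nlinarith
  linarith

private lemma sum_filter_eq_sum_range' (d m : ℕ) (hmd : m ≤ d) (f : Fin d → ℝ) :
    ∑ j ∈ Finset.univ.filter (fun j : Fin d => (j : ℕ) < m), f j
      = ∑ n ∈ Finset.range m, (if h : n < d then f ⟨n, h⟩ else 0) := by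
  have hfil : (Finset.range d).filter (fun n => n < m) = Finset.range m := by
    ext n; simp; omega
  rw [Finset.sum_filter]
  have h1 : ∑ j : Fin d, (if (j : ℕ) < m then f j else 0)
      = ∑ n ∈ Finset.range d, (if n < m then (if h : n < d then f ⟨n, h⟩ else 0) else 0) := by
    rw [Finset.sum_range fun n => _]
    · apply Finset.sum_congr rfl
      intro j _
      by_cases h : (j : ℕ) < m <;> simp [h, Fin.is_lt]
  rw [h1, ← Finset.sum_filter, hfil]

theorem stmt19 (d k : ℕ) (hkd : k ≤ d) (A : Matrix (Fin d) (Fin d) ℝ)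
    (hA : A.PosSemidef)
    (lam : Fin d → ℝ) (u : Fin d → Fin d → ℝ)
    (horth : ∀ j l : Fin d, u j ⬝ᵥ u l = if j = l then 1 else 0)
    (heig : ∀ j : Fin d, A.mulVec (u j) = lam j • u j)
    (hdec : ∀ j l : Fin d, j ≤ l → lam l ≤ lam j)
    (hnn : ∀ j : Fin d, 0 ≤ lam j) :
    ∀ W : Matrix (Fin d) (Fin k) ℝ,
      (Wᵀ * A * W * (2 - Wᵀ * W)).trace = (A * (W * Wᵀ * (2 - W * Wᵀ))).trace ∧
      (Wᵀ * A * W * (2 - Wᵀ * W)).trace ≤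
        ∑ j ∈ Finset.univ.filter (fun j : Fin d => (j : ℕ) < k), lam j := by
  intro W
  have heq : (Wᵀ * A * W * (2 - Wᵀ * W)).trace = (A * (W * Wᵀ * (2 - W * Wᵀ))).trace := by
    have h2 : W * (2 - Wᵀ * W) * Wᵀ = W * Wᵀ * (2 - W * Wᵀ) := by
      have e1 : (2 : Matrix (Fin k) (Fin k) ℝ) = 1 + 1 := by norm_num
      have e2 : (2 : Matrix (Fin d) (Fin d) ℝ) = 1 + 1 := by norm_num
      rw [e1, e2]
      simp only [Matrix.mul_sub, Matrix.sub_mul, Matrix.mul_add, Matrix.add_mul,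
        Matrix.mul_one, Matrix.one_mul, Matrix.mul_assoc]
    have h1 : Wᵀ * A * W * (2 - Wᵀ * W) = Wᵀ * (A * W * (2 - Wᵀ * W)) := by
      simp only [Matrix.mul_assoc]
    rw [h1, Matrix.trace_mul_comm, Matrix.mul_assoc, Matrix.mul_assoc, ← Matrix.mul_assoc W, h2,
      ← Matrix.mul_assoc]
  refine ⟨heq, ?_⟩
  rw [heq]
  set C : Matrix (Fin d) (Fin d) ℝ := W * Wᵀ with hCdef
  have hWT : Wᴴ = Wᵀ := by ext i j; simp
  have hC : C.IsHermitian := by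
    rw [hCdef, ← hWT]; exact Matrix.isHermitian_mul_conjTranspose_self W
  set σ : Fin d → ℝ := hC.eigenvalues with hσdef
  set V : Matrix (Fin d) (Fin d) ℝ := (hC.eigenvectorUnitary : Matrix (Fin d) (Fin d) ℝ)
    with hVdef
  have hsV : star V = Vᵀ := by ext i j; simp [Matrix.star_apply]
  have hspec : C = V * Matrix.diagonal σ * Vᵀ := by
    have := hC.spectral_theorem
    rw [Unitary.conjStarAlgAut_apply, ← hVdef] at this
    rw [hsV] at this
    simpa [Function.comp] using this
  have hV1 : V * Vᵀ = 1 := by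
    rw [← hsV]
    exact Matrix.mem_unitaryGroup_iff.mp (hC.eigenvectorUnitary).2
  have hV2 : Vᵀ * V = 1 := mul_eq_one_comm.mp hV1
  set U : Matrix (Fin d) (Fin d) ℝ := Matrix.of u with hUdef
  have hUU : U * Uᵀ = 1 := by
    ext j l
    simpa [hUdef, Matrix.mul_apply, Matrix.one_apply, dotProduct] using horth j l
  have hUtU : Uᵀ * U = 1 := mul_eq_one_comm.mp hUU
  have hAsymm : ∀ i j, A i j = A j i := by
    intro i j
    conv_lhs => rw [← hA.1]
    simp [Matrix.conjTranspose_apply]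
  have hUA : U * A = Matrix.diagonal lam * U := by
    ext j l
    have h1 : (U * A) j l = ∑ m, A l m * u j m := by
      rw [Matrix.mul_apply]
      exact Finset.sum_congr rfl fun m _ => by
        rw [hAsymm m l]; simp [hUdef]; ring
    have h2 : (A.mulVec (u j)) l = lam j * u j l := by rw [heig j]; simp
    rw [h1, Matrix.diagonal_mul]
    rw [Matrix.mulVec, dotProduct] at h2
    exact h2.trans (by simp [hUdef])
  have hAeq : A = Uᵀ * (Matrix.diagonal lam * U) := by
    calc A = (Uᵀ * U) * A := by rw [hUtU, Matrix.one_mul]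
    _ = Uᵀ * (U * A) := by rw [Matrix.mul_assoc]
    _ = Uᵀ * (Matrix.diagonal lam * U) := by rw [hUA]
  set m : Fin d → ℝ := fun i => 2 * σ i - σ i * σ i with hmdef
  have h2smul : (2 : Matrix (Fin d) (Fin d) ℝ) = (2 : ℝ) • 1 := by
    rw [two_smul]; norm_num
  have hCC : C * C = V * Matrix.diagonal (fun i => σ i * σ i) * Vᵀ := by
    conv_lhs => rw [hspec]
    rw [← Matrix.diagonal_mul_diagonal]
    calc V * Matrix.diagonal σ * Vᵀ * (V * Matrix.diagonal σ * Vᵀ)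
        = V * Matrix.diagonal σ * (Vᵀ * V) * Matrix.diagonal σ * Vᵀ := by
          simp only [Matrix.mul_assoc]
      _ = V * (Matrix.diagonal σ * Matrix.diagonal σ) * Vᵀ := by
          rw [hV2]; try simp only [Matrix.mul_one, Matrix.mul_assoc]
  have hdm : Matrix.diagonal m = (2:ℝ) • Matrix.diagonal σ
      - Matrix.diagonal (fun i => σ i * σ i) := by
    rw [← Matrix.diagonal_smul, ← Matrix.diagonal_sub]
    congr 1
    all_goals (funext i; simp [hmdef, smul_eq_mul])
  have hN : C * (2 - C) = V * Matrix.diagonal m * Vᵀ := by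
    have hrhs : V * Matrix.diagonal m * Vᵀ = (2:ℝ) • C - C * C := by
      rw [hdm, Matrix.mul_sub, Matrix.sub_mul, mul_smul_comm, smul_mul_assoc, ← hspec, ← hCC]
    rw [hrhs, Matrix.mul_sub, h2smul, mul_smul_comm, Matrix.mul_one]
  set R : Matrix (Fin d) (Fin d) ℝ := U * V with hRdef
  set t : Fin d → ℝ := fun j => ∑ i, m i * (R j i)^2 with htdef
  have hY : ∀ j, (R * Matrix.diagonal m * Rᵀ) j j = t j := by
    intro j
    rw [Matrix.mul_apply]
    simp only [htdef]
    apply Finset.sum_congr rfl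
    intro i _
    rw [Matrix.mul_diagonal, Matrix.transpose_apply]
    ring
  have htrace : (A * (C * (2 - C))).trace = ∑ j, lam j * t j := by
    rw [hN]
    conv_lhs => rw [hAeq, Matrix.mul_assoc]
    rw [Matrix.trace_mul_comm]
    have hprod : Matrix.diagonal lam * U * (V * Matrix.diagonal m * Vᵀ) * Uᵀ
        = Matrix.diagonal lam * (R * Matrix.diagonal m * Rᵀ) := by
      rw [hRdef, Matrix.transpose_mul]
      simp only [Matrix.mul_assoc]
    rw [hprod, Matrix.trace]
    apply Finset.sum_congr rfl
    intro j _
    rw [Matrix.diag_apply, Matrix.diagonal_mul, hY j]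
  have hRR : R * Rᵀ = 1 := by
    rw [hRdef, Matrix.transpose_mul]
    calc U * V * (Vᵀ * Uᵀ) = U * (V * Vᵀ) * Uᵀ := by simp only [Matrix.mul_assoc]
    _ = 1 := by rw [hV1, Matrix.mul_one, hUU]
  have hRrow : ∀ j, ∑ i, (R j i)^2 = 1 := by
    intro j
    have h2 := congrFun (congrFun hRR j) j
    rw [Matrix.mul_apply] at h2
    simp only [Matrix.one_apply_eq] at h2
    rw [← h2]
    exact Finset.sum_congr rfl fun i _ => by rw [Matrix.transpose_apply]; ring
  have hRcol : ∀ i, ∑ j, (R j i)^2 = 1 := by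
    intro i
    have hRR2 : Rᵀ * R = 1 := mul_eq_one_comm.mp hRR
    have h2 := congrFun (congrFun hRR2 i) i
    rw [Matrix.mul_apply] at h2
    simp only [Matrix.one_apply_eq] at h2
    rw [← h2]
    exact Finset.sum_congr rfl fun j _ => by rw [Matrix.transpose_apply]; ring
  have hm1 : ∀ i, m i ≤ 1 := by
    intro i
    have := sq_nonneg (1 - σ i)
    simp only [hmdef]
    nlinarith
  have hm0 : ∀ i, σ i = 0 → m i = 0 := by
    intro i h; simp [hmdef, h]
  have hcard : ((Finset.univ.filter (fun i : Fin d => σ i ≠ 0)).card : ℝ) ≤ k := by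
    have h1 : C.rank = Fintype.card {i // σ i ≠ 0} := hC.rank_eq_card_non_zero_eigs
    have h2 : C.rank = W.rank := by rw [hCdef]; exact Matrix.rank_self_mul_transpose W
    have h3 : W.rank ≤ k := le_trans (Matrix.rank_le_card_width W) (by simp)
    rw [Fintype.card_subtype] at h1
    have : (Finset.univ.filter (fun i : Fin d => σ i ≠ 0)).card ≤ k := by omega
    exact_mod_cast this
  have hSk : ∀ S : Finset (Fin d), ∑ j ∈ S, t j ≤ (k : ℝ) := by
    intro S
    have hswap : ∑ j ∈ S, t j = ∑ i, m i * ∑ j ∈ S, (R j i)^2 := by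
      simp only [htdef]
      rw [Finset.sum_comm]
      exact Finset.sum_congr rfl fun i _ => by rw [Finset.mul_sum]
    rw [hswap]
    have step : ∀ i : Fin d, m i * ∑ j ∈ S, (R j i)^2 ≤ (if σ i = 0 then (0:ℝ) else 1) := by
      intro i
      by_cases h : σ i = 0
      · simp [hm0 i h, h]
      · have hq0 : 0 ≤ ∑ j ∈ S, (R j i)^2 := Finset.sum_nonneg fun j _ => sq_nonneg _
        have hq1 : ∑ j ∈ S, (R j i)^2 ≤ 1 := by
          rw [← hRcol i]
          exact Finset.sum_le_sum_of_subset_of_nonneg (Finset.subset_univ S)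
            (fun j _ _ => sq_nonneg _)
        simp only [h, if_false]
        calc m i * ∑ j ∈ S, (R j i)^2 ≤ 1 * ∑ j ∈ S, (R j i)^2 :=
              mul_le_mul_of_nonneg_right (hm1 i) hq0
        _ = ∑ j ∈ S, (R j i)^2 := one_mul _
        _ ≤ 1 := hq1
    calc ∑ i, m i * ∑ j ∈ S, (R j i)^2 ≤ ∑ i : Fin d, (if σ i = 0 then (0:ℝ) else 1) :=
          Finset.sum_le_sum fun i _ => step i
    _ = ((Finset.univ.filter (fun i : Fin d => σ i ≠ 0)).card : ℝ) := by
        rw [Finset.sum_ite]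
        simp
    _ ≤ k := hcard
  have hS1 : ∀ j, t j ≤ 1 := by
    intro j
    calc t j ≤ ∑ i, (R j i)^2 := by
          simp only [htdef]
          apply Finset.sum_le_sum
          intro i _
          calc m i * (R j i)^2 ≤ 1 * (R j i)^2 :=
                mul_le_mul_of_nonneg_right (hm1 i) (sq_nonneg _)
          _ = (R j i)^2 := one_mul _
    _ = 1 := hRrow j
  rw [htrace]
  set μ : ℕ → ℝ := fun n => if h : n < d then lam ⟨n, h⟩ else 0 with hμdef
  set τ : ℕ → ℝ := fun n => if h : n < d then t ⟨n, h⟩ else 0 with hτdef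
  have hL : ∑ j, lam j * t j = ∑ n ∈ Finset.range d, μ n * τ n := by
    rw [Finset.sum_range fun n => μ n * τ n]
    apply Finset.sum_congr rfl
    intro j _
    simp [hμdef, hτdef, j.isLt]
  have hRS : ∑ j ∈ Finset.univ.filter (fun j : Fin d => (j : ℕ) < k), lam j
      = ∑ n ∈ Finset.range k, μ n := by
    rw [sum_filter_eq_sum_range' d k hkd lam]
  rw [hL, hRS]
  apply abel_bound' d k hkd μ τ
  · intro i j hij
    simp only [hμdef]
    by_cases hj : j < d
    · have hi : i < d := lt_of_le_of_lt hij hj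
      rw [dif_pos hi, dif_pos hj]
      exact hdec ⟨i, hi⟩ ⟨j, hj⟩ hij
    · rw [dif_neg hj]
      by_cases hi : i < d
      · rw [dif_pos hi]; exact hnn _
      · rw [dif_neg hi]
  · intro i
    simp only [hμdef]
    by_cases hi : i < d
    · rw [dif_pos hi]; exact hnn _
    · rw [dif_neg hi]
  · intro mm hm
    have hconv : ∑ j ∈ Finset.range mm, τ j
        = ∑ j ∈ Finset.univ.filter (fun j : Fin d => (j : ℕ) < mm), t j :=
      (sum_filter_eq_sum_range' d mm hm t).symm
    rw [Nat.cast_min]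
    apply le_min
    · -- ≤ mm
      calc ∑ j ∈ Finset.range mm, τ j ≤ ∑ j ∈ Finset.range mm, (1:ℝ) := by
            apply Finset.sum_le_sum
            intro n hn
            have hnd : n < d := lt_of_lt_of_le (Finset.mem_range.mp hn) hm
            simp only [hτdef]
            rw [dif_pos hnd]
            exact hS1 _
      _ = mm := by simp
    · rw [hconv]; exact hSk _
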